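/- If P_G decomposes via a hyperplane H into P_G ∩ H^{(+)} and P_G ∩ H^{(-)}, then both pieces are themselves edge polytopes: there exist connected spanning subgraphs G_+ and G_- of G with P_G ∩ H^{(+)} = P_{G_+} and P_G ∩ H^{(-)} = P_{G_-}, where E(G_+) = {e : s_H(e) ≥ 0} and E(G_-) = {e : s_H(e) ≤ 0}. -/

import Mathlib

open scoped BigOperators

/-- `ρ(i,j) = e_i + e_j` -/
noncomputable def rho {d : ℕ} (i j : Fin d) : Fin d → ℝ :=
  fun t => (if t = i then 1 else 0) + (if t = j then 1 else 0)

/-- The edge polytope of a graph `G` on `[d]`. -/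
noncomputable def edgePolytope {d : ℕ} (G : SimpleGraph (Fin d)) : Set (Fin d → ℝ) :=
  convexHull ℝ {x | ∃ i j, G.Adj i j ∧ x = rho i j}

/-- dot product -/
def dotp {d : ℕ} (a x : Fin d → ℝ) : ℝ := ∑ t, a t * x t

/-- a polytope is integral if all its vertices (extreme points) are lattice points -/
def IsIntegralSet {d : ℕ} (P : Set (Fin d → ℝ)) : Prop :=
  ∀ x ∈ Set.extremePoints ℝ P, ∀ t, ∃ z : ℤ, x t = (z : ℝ)

/-- The hyperplane `a·x = b` decomposes `P`: it meets the relative interior of `P`,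
both open sides meet `P`, and both closed half-space pieces are integral. -/
def Decomposes {d : ℕ} (P : Set (Fin d → ℝ)) (a : Fin d → ℝ) (b : ℝ) : Prop :=
  (∃ x ∈ intrinsicInterior ℝ P, dotp a x = b) ∧
  (∃ y ∈ P, dotp a y < b) ∧ (∃ y ∈ P, b < dotp a y) ∧
  IsIntegralSet (P ∩ {x | b ≤ dotp a x}) ∧
  IsIntegralSet (P ∩ {x | dotp a x ≤ b})

section Aux

variable {d : ℕ}

lemma rho_nonneg (i j t : Fin d) : 0 ≤ rho i j t := by
  unfold rho; split_ifs <;> norm_num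

lemma rho_left {i j : Fin d} (h : i ≠ j) : rho i j i = 1 := by
  simp [rho, h]

lemma rho_right {i j : Fin d} (h : i ≠ j) : rho i j j = 1 := by
  unfold rho
  rw [if_neg (fun hh => h hh.symm), if_pos rfl]
  norm_num

lemma rho_ne {i j t : Fin d} (hi : t ≠ i) (hj : t ≠ j) : rho i j t = 0 := by
  simp [rho, hi, hj]

lemma rho_le_one {i j : Fin d} (h : i ≠ j) (t : Fin d) : rho i j t ≤ 1 := by
  unfold rho
  split_ifs with h1 h2 h2 <;> try norm_num
  exact absurd (h1.symm.trans h2) h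

lemma isLinearMap_dotp (a : Fin d → ℝ) : IsLinearMap ℝ (dotp a) := by
  constructor
  · intro x y
    unfold dotp
    simp [Pi.add_apply, mul_add, Finset.sum_add_distrib]
  · intro c x
    unfold dotp
    simp only [Pi.smul_apply, smul_eq_mul, Finset.mul_sum]
    exact Finset.sum_congr rfl fun t _ => by ring

lemma continuous_dotp (a : Fin d → ℝ) : Continuous (dotp a) := by
  unfold dotp
  exact continuous_finset_sum _ fun t _ => continuous_const.mul (continuous_apply t)

lemma dotp_rho (a : Fin d → ℝ) {i j : Fin d} (h : i ≠ j) : dotp a (rho i j) = a i + a j := by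
  unfold dotp rho
  simp [mul_add, mul_ite, mul_one, mul_zero, Finset.sum_add_distrib, Finset.sum_ite_eq']

lemma dotp_neg (a x : Fin d → ℝ) : dotp (-a) x = - dotp a x := by
  unfold dotp
  simp [Finset.sum_neg_distrib]

lemma dotp_combo (a y z : Fin d → ℝ) (c c' : ℝ) :
    dotp a (c • y + c' • z) = c * dotp a y + c' * dotp a z := by
  have h := isLinearMap_dotp a
  rw [h.map_add, h.map_smul, h.map_smul]
  simp [smul_eq_mul]

lemma sum_rho {i j : Fin d} (h : i ≠ j) : ∑ t, rho i j t = 2 := by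
  unfold rho
  simp [Finset.sum_add_distrib, Finset.sum_ite_eq']
  norm_num

lemma isLinearMap_sum : IsLinearMap ℝ (fun y : Fin d → ℝ => ∑ t, y t) :=
  ⟨fun x y => by simp [Finset.sum_add_distrib], fun c x => by
    simp [Finset.mul_sum]⟩

lemma isLinearMap_eval (t : Fin d) : IsLinearMap ℝ (fun y : Fin d → ℝ => y t) :=
  ⟨fun _ _ => rfl, fun _ _ => rfl⟩

lemma edgePolytope_bounds (G : SimpleGraph (Fin d)) {x : Fin d → ℝ} (hx : x ∈ edgePolytope G) :
    (∀ t, 0 ≤ x t) ∧ (∀ t, x t ≤ 1) ∧ ∑ t, x t = 2 := by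
  refine ⟨fun t => ?_, fun t => ?_, ?_⟩
  · have h : edgePolytope G ⊆ {y | 0 ≤ y t} := by
      apply convexHull_min _ (convex_halfSpace_ge (isLinearMap_eval t) 0)
      rintro y ⟨i, j, _, rfl⟩
      exact rho_nonneg i j t
    exact h hx
  · have h : edgePolytope G ⊆ {y | y t ≤ 1} := by
      apply convexHull_min _ (convex_halfSpace_le (isLinearMap_eval t) 1)
      rintro y ⟨i, j, hij, rfl⟩
      exact rho_le_one hij.ne t
    exact h hx
  · have h : edgePolytope G ⊆ {y | ∑ t, y t = 2} := by
      apply convexHull_min _ (convex_hyperplane isLinearMap_sum 2)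
      rintro y ⟨i, j, hij, rfl⟩
      exact sum_rho hij.ne
    exact h hx

lemma vset_finite (G : SimpleGraph (Fin d)) :
    {x : Fin d → ℝ | ∃ i j, G.Adj i j ∧ x = rho i j}.Finite := by
  apply Set.Finite.subset (Set.finite_range (fun p : Fin d × Fin d => rho p.1 p.2))
  rintro x ⟨i, j, _, rfl⟩
  exact ⟨(i, j), rfl⟩

/-- the positive-part graph -/
def Gplus {d : ℕ} (G : SimpleGraph (Fin d)) (a : Fin d → ℝ) : SimpleGraph (Fin d) where
  Adj i j := G.Adj i j ∧ 0 ≤ a i + a j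
  symm := by
    constructor
    rintro i j ⟨h, h'⟩
    exact ⟨h.symm, by linarith⟩
  loopless := by
    constructor
    rintro i ⟨h, _⟩
    exact G.loopless.irrefl i h

lemma extreme_classify (G : SimpleGraph (Fin d)) (a : Fin d → ℝ)
    (hint : IsIntegralSet (edgePolytope G ∩ {x | 0 ≤ dotp a x})) :
    Set.extremePoints ℝ (edgePolytope G ∩ {x | 0 ≤ dotp a x}) ⊆
      {x | ∃ i j, (Gplus G a).Adj i j ∧ x = rho i j} := by
  classical
  intro x hx
  obtain ⟨hxP, hxH⟩ := extremePoints_subset hx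
  obtain ⟨h0, h1, hsum⟩ := edgePolytope_bounds G hxP
  have h01 : ∀ t, x t = 0 ∨ x t = 1 := by
    intro t
    obtain ⟨z, hz⟩ := hint x hx t
    have hz0 : (0:ℝ) ≤ z := hz ▸ h0 t
    have hz1 : (z:ℝ) ≤ 1 := hz ▸ h1 t
    have : z = 0 ∨ z = 1 := by
      have h0' : 0 ≤ z := by exact_mod_cast hz0
      have h1' : z ≤ 1 := by exact_mod_cast hz1
      omega
    rcases this with h | h <;> [left; right] <;> rw [hz, h] <;> norm_num
  set S : Finset (Fin d) := Finset.univ.filter (fun t => x t = 1) with hSdef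
  have hcard : S.card = 2 := by
    have h2 : (2:ℝ) = (S.card : ℝ) := by
      rw [← hsum, hSdef, ← Finset.sum_boole]
      apply Finset.sum_congr rfl
      intro t _
      rcases h01 t with h | h <;> simp [h]
    exact_mod_cast h2.symm
  obtain ⟨i, j, hij, hSij⟩ := Finset.card_eq_two.mp hcard
  have hmem : ∀ t, x t = 1 ↔ (t = i ∨ t = j) := by
    intro t
    constructor
    · intro h
      have : t ∈ S := by simp [hSdef, h]
      rw [hSij] at this
      simpa using this
    · rintro (rfl | rfl) <;>
        · have : t ∈ S := by rw [hSij]; simp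
          simpa [hSdef] using this
  have hxr : x = rho i j := by
    funext t
    rcases h01 t with h | h
    · have hti : t ≠ i := fun ht => by simp [(hmem t).2 (Or.inl ht)] at h
      have htj : t ≠ j := fun ht => by simp [(hmem t).2 (Or.inr ht)] at h
      rw [h, rho_ne hti htj]
    · rcases (hmem t).1 h with rfl | rfl
      · rw [h, rho_left hij]
      · rw [h, rho_right hij]
  have hAdj : G.Adj i j := by
    by_contra hnadj
    have hsub : edgePolytope G ⊆ {y | y i + y j ≤ 1} := by
      apply convexHull_min _ (convex_halfSpace_le
        (⟨fun y z => by simp only [Pi.add_apply]; ring,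
          fun c z => by simp only [Pi.smul_apply, smul_eq_mul]; ring⟩ :
          IsLinearMap ℝ (fun y : Fin d → ℝ => y i + y j)) 1)
      rintro y ⟨p, q, hpq, rfl⟩
      have hne : p ≠ q := hpq.ne
      have hc1 : ¬(p = i ∧ q = j) := by
        rintro ⟨rfl, rfl⟩; exact hnadj hpq
      have hc2 : ¬(p = j ∧ q = i) := by
        rintro ⟨rfl, rfl⟩; exact hnadj hpq.symm
      show rho p q i + rho p q j ≤ 1
      unfold rho
      split_ifs <;> simp_all <;> norm_num
    have := hsub hxP
    rw [Set.mem_setOf_eq, (hmem i).2 (Or.inl rfl), (hmem j).2 (Or.inr rfl)] at this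
    linarith
  refine ⟨i, j, ⟨hAdj, ?_⟩, hxr⟩
  have := hxH
  rw [Set.mem_setOf_eq, hxr, dotp_rho a hij] at this
  exact this

lemma piece_eq (G : SimpleGraph (Fin d)) (a : Fin d → ℝ)
    (hint : IsIntegralSet (edgePolytope G ∩ {x | 0 ≤ dotp a x})) :
    edgePolytope (Gplus G a) = edgePolytope G ∩ {x | 0 ≤ dotp a x} := by
  apply Set.Subset.antisymm
  · apply convexHull_min
    · rintro y ⟨i, j, ⟨hadj, hs⟩, rfl⟩
      refine ⟨subset_convexHull ℝ _ ⟨i, j, hadj, rfl⟩, ?_⟩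
      rw [Set.mem_setOf_eq, dotp_rho a hadj.ne]
      exact hs
    · exact (convex_convexHull ℝ _).inter (convex_halfSpace_ge (isLinearMap_dotp a) 0)
  · have hfin := vset_finite G
    have hfinp := vset_finite (Gplus G a)
    have hQc : IsCompact (edgePolytope G ∩ {x | 0 ≤ dotp a x}) :=
      (hfin.isCompact_convexHull ℝ).inter_right (isClosed_le continuous_const (continuous_dotp a))
    have hQconv : Convex ℝ (edgePolytope G ∩ {x | 0 ≤ dotp a x}) :=
      (convex_convexHull ℝ _).inter (convex_halfSpace_ge (isLinearMap_dotp a) 0)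
    calc edgePolytope G ∩ {x | 0 ≤ dotp a x}
        = closure (convexHull ℝ (Set.extremePoints ℝ (edgePolytope G ∩ {x | 0 ≤ dotp a x}))) :=
          (closure_convexHull_extremePoints hQc hQconv).symm
      _ ⊆ closure (edgePolytope (Gplus G a)) := by
          apply closure_mono
          apply convexHull_min _ (convex_convexHull ℝ _)
          exact (extreme_classify G a hint).trans (subset_convexHull ℝ _)
      _ = edgePolytope (Gplus G a) := (hfinp.isCompact_convexHull ℝ).isClosed.closure_eq

lemma bad_edge {G : SimpleGraph (Fin d)} (a : Fin d → ℝ) {u v : Fin d} (w : G.Walk u v)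
    (h : ¬ (Gplus G a).Reachable u v) :
    ∃ i j, G.Adj i j ∧ ¬ (Gplus G a).Reachable i j := by
  revert h
  induction w with
  | nil => exact fun h => absurd (SimpleGraph.Reachable.refl _) h
  | @cons u' v' w' hadj p ih =>
    intro h
    by_cases hr : (Gplus G a).Reachable u' v'
    · exact ih (fun h' => h (hr.trans h'))
    · exact ⟨u', v', hadj, hr⟩

lemma isLinearMap_aux (v0 : Fin d) (c : Fin d → Prop) [DecidablePred c] :
    IsLinearMap ℝ (fun y : Fin d → ℝ => y v0 - ∑ t, (if c t then y t else 0)) := by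
  constructor
  · intro y z
    simp only [Pi.add_apply]
    have h : ∀ t ∈ Finset.univ, (if c t then y t + z t else 0)
        = (if c t then y t else 0) + (if c t then z t else 0) := by
      intro t _; split_ifs <;> simp
    rw [Finset.sum_congr rfl h, Finset.sum_add_distrib]; ring
  · intro m y
    simp only [Pi.smul_apply, smul_eq_mul]
    have h : ∀ t ∈ Finset.univ, (if c t then m * y t else 0)
        = m * (if c t then y t else 0) := by
      intro t _; split_ifs <;> simp
    rw [Finset.sum_congr rfl h, ← Finset.mul_sum]; ring

lemma gplus_connected (G : SimpleGraph (Fin d)) (hG : G.Connected) (a : Fin d → ℝ)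
    (hpos : ∃ y ∈ edgePolytope G, 0 < dotp a y)
    (heq : edgePolytope (Gplus G a) = edgePolytope G ∩ {x | 0 ≤ dotp a x}) :
    (Gplus G a).Connected := by
  classical
  rw [SimpleGraph.connected_iff]
  refine ⟨?_, hG.nonempty⟩
  intro u v
  by_contra hreach
  obtain ⟨wuv⟩ := hG.preconnected u v
  obtain ⟨i0, j0, hadj0, hnr⟩ := bad_edge a wuv hreach
  obtain ⟨p, q, hpq, hspos⟩ : ∃ p q, G.Adj p q ∧ 0 < a p + a q := by
    by_contra hc
    push_neg at hc
    obtain ⟨y, hy, hy'⟩ := hpos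
    have hsub : edgePolytope G ⊆ {x | dotp a x ≤ 0} := by
      apply convexHull_min _ (convex_halfSpace_le (isLinearMap_dotp a) 0)
      rintro z ⟨i, j, hij, rfl⟩
      rw [Set.mem_setOf_eq, dotp_rho a hij.ne]
      exact hc i j hij
    have hle := hsub hy
    rw [Set.mem_setOf_eq] at hle
    linarith
  have hs0 : a i0 + a j0 < 0 := by
    by_contra hge
    push_neg at hge
    exact hnr (SimpleGraph.Adj.reachable ⟨hadj0, hge⟩)
  have hpq' : (Gplus G a).Adj p q := ⟨hpq, hspos.le⟩
  obtain ⟨v0, w0, hvw, hs0', hnw, hnp, hnq⟩ :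
      ∃ v0 w0, G.Adj v0 w0 ∧ a v0 + a w0 < 0 ∧ ¬(Gplus G a).Reachable v0 w0 ∧
        ¬(Gplus G a).Reachable v0 p ∧ ¬(Gplus G a).Reachable v0 q := by
    by_cases hcase : (Gplus G a).Reachable i0 p
    · refine ⟨j0, i0, hadj0.symm, by linarith, ?_, ?_, ?_⟩
      · exact fun h => hnr h.symm
      · exact fun h => hnr (hcase.trans h.symm)
      · exact fun h => hnr (hcase.trans ((h.trans hpq'.symm.reachable).symm))
    · refine ⟨i0, j0, hadj0, hs0, hnr, hcase, ?_⟩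
      exact fun h => hcase (h.trans hpq'.symm.reachable)
  set s0 : ℝ := a v0 + a w0 with hs0def
  set s1 : ℝ := a p + a q with hs1def
  have hd : (0:ℝ) < s1 - s0 := by simp only [hs0def, hs1def]; linarith
  set ε : ℝ := s1 / (2 * (s1 - s0)) with hεdef
  have hε0 : 0 < ε := div_pos hspos (by linarith)
  have hε1 : ε ≤ 1 / 2 := by
    rw [hεdef, div_le_iff₀ (by linarith)]
    simp only [hs0def, hs1def]
    nlinarith
  set x : Fin d → ℝ := ε • rho v0 w0 + (1 - ε) • rho p q with hxdef
  have hxP : x ∈ edgePolytope G := by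
    rw [hxdef]
    have hm1 : rho v0 w0 ∈ {x : Fin d → ℝ | ∃ i j, G.Adj i j ∧ x = rho i j} := ⟨v0, w0, hvw, rfl⟩
    have hm2 : rho p q ∈ {x : Fin d → ℝ | ∃ i j, G.Adj i j ∧ x = rho i j} := ⟨p, q, hpq, rfl⟩
    exact (convex_convexHull ℝ _) (subset_convexHull ℝ _ hm1)
      (subset_convexHull ℝ _ hm2) hε0.le (by linarith) (by ring)
  have hdx : dotp a x = s1 / 2 := by
    rw [hxdef, dotp_combo, dotp_rho a hvw.ne, dotp_rho a hpq.ne, ← hs0def, ← hs1def, hεdef]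
    have hne : s1 - s0 ≠ 0 := ne_of_gt hd
    field_simp
    ring
  have hxGp : x ∈ edgePolytope (Gplus G a) := by
    rw [heq]
    refine ⟨hxP, ?_⟩
    rw [Set.mem_setOf_eq, hdx]
    linarith
  have hK : edgePolytope (Gplus G a) ⊆
      {y : Fin d → ℝ | y v0 - ∑ t, (if ((Gplus G a).Reachable v0 t ∧ t ≠ v0) then y t else 0) ≤ 0} := by
    apply convexHull_min _ (convex_halfSpace_le
      (isLinearMap_aux v0 (fun t => (Gplus G a).Reachable v0 t ∧ t ≠ v0)) 0)
    rintro z ⟨i, j, hij, rfl⟩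
    have hne : i ≠ j := hij.ne
    have hnn : ∀ (r : Fin d → ℝ), (∀ t, 0 ≤ r t) → ∀ t ∈ Finset.univ,
        (0:ℝ) ≤ (if ((Gplus G a).Reachable v0 t ∧ t ≠ v0) then r t else 0) := by
      intro r hr t _
      split_ifs
      · exact hr t
      · exact le_rfl
    have hsnn : (0:ℝ) ≤ ∑ t, (if ((Gplus G a).Reachable v0 t ∧ t ≠ v0) then rho i j t else 0) :=
      Finset.sum_nonneg (hnn (rho i j) (rho_nonneg i j))
    have hterm : ∀ w : Fin d, (Gplus G a).Reachable v0 w → w ≠ v0 → rho i j w = 1 →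
        (1:ℝ) ≤ ∑ t, (if ((Gplus G a).Reachable v0 t ∧ t ≠ v0) then rho i j t else 0) := by
      intro w hw1 hw2 hw3
      have hb := Finset.single_le_sum (hnn (rho i j) (rho_nonneg i j)) (Finset.mem_univ w)
      rw [if_pos ⟨hw1, hw2⟩, hw3] at hb
      exact hb
    by_cases hvi : v0 = i
    · subst hvi
      rw [Set.mem_setOf_eq, rho_left hne]
      have := hterm j hij.reachable (fun h => hne h.symm) (rho_right hne)
      linarith
    · by_cases hvj : v0 = j
      · subst hvj
        rw [Set.mem_setOf_eq, rho_right hne]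
        have := hterm i hij.symm.reachable (fun h => hne h) (rho_left hne)
        linarith
      · rw [Set.mem_setOf_eq, rho_ne hvi hvj]
        linarith
  have hvp : v0 ≠ p := fun h => hnp (by rw [← h])
  have hvq : v0 ≠ q := fun h => hnq (by rw [← h])
  have hxv0 : x v0 = ε := by
    rw [hxdef]
    simp only [Pi.add_apply, Pi.smul_apply, smul_eq_mul]
    rw [rho_left hvw.ne, rho_ne hvp hvq]
    ring
  have hsum0 : ∑ t, (if ((Gplus G a).Reachable v0 t ∧ t ≠ v0) then x t else 0) = 0 := by
    apply Finset.sum_eq_zero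
    intro t _
    split_ifs with hc
    · obtain ⟨hr, hnev⟩ := hc
      have htw : t ≠ w0 := fun h => hnw (h ▸ hr)
      have htp : t ≠ p := fun h => hnp (h ▸ hr)
      have htq : t ≠ q := fun h => hnq (h ▸ hr)
      rw [hxdef]
      simp only [Pi.add_apply, Pi.smul_apply, smul_eq_mul]
      rw [rho_ne hnev htw, rho_ne htp htq]
      ring
    · rfl
  have hfinal := hK hxGp
  rw [Set.mem_setOf_eq, hsum0, hxv0] at hfinal
  linarith

end Aux

/-- the two pieces of a decomposition of the edge polytope are themselves
edge polytopes of connected spanning subgraphs. -/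
theorem stmt6 {d : ℕ} (G : SimpleGraph (Fin d)) (hG : G.Connected) (a : Fin d → ℝ)
    (hdec : Decomposes (edgePolytope G) a 0) :
    ∃ Gp Gm : SimpleGraph (Fin d),
      (∀ i j, Gp.Adj i j ↔ G.Adj i j ∧ 0 ≤ a i + a j) ∧
      (∀ i j, Gm.Adj i j ↔ G.Adj i j ∧ a i + a j ≤ 0) ∧
      Gp.Connected ∧ Gm.Connected ∧
      edgePolytope Gp = edgePolytope G ∩ {x | 0 ≤ dotp a x} ∧
      edgePolytope Gm = edgePolytope G ∩ {x | dotp a x ≤ 0} := by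
  obtain ⟨-, ⟨y1, hy1, hy1'⟩, ⟨y2, hy2, hy2'⟩, hintp, hintm⟩ := hdec
  have hnegset : {x : Fin d → ℝ | 0 ≤ dotp (-a) x} = {x | dotp a x ≤ 0} := by
    ext z
    simp [dotp_neg]
  have heqp := piece_eq G a hintp
  have hintm' : IsIntegralSet (edgePolytope G ∩ {x : Fin d → ℝ | 0 ≤ dotp (-a) x}) := by
    rw [hnegset]; exact hintm
  have heqm := piece_eq G (-a) hintm'
  rw [hnegset] at heqm
  have hconp := gplus_connected G hG a ⟨y2, hy2, hy2'⟩ heqp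
  have hconm : (Gplus G (-a)).Connected := by
    apply gplus_connected G hG (-a) ⟨y1, hy1, by rw [dotp_neg]; linarith⟩
    rw [hnegset]; exact heqm
  refine ⟨Gplus G a, Gplus G (-a), fun i j => Iff.rfl, fun i j => ?_, hconp, hconm, heqp, heqm⟩
  show (G.Adj i j ∧ 0 ≤ (-a) i + (-a) j) ↔ _
  simp only [Pi.neg_apply]
  constructor
  · rintro ⟨h1, h2⟩; exact ⟨h1, by linarith⟩
  · rintro ⟨h1, h2⟩; exact ⟨h1, by linarith⟩
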